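/- Let A be a commutative ring which is a ℚ-algebra, let d : A → A be a derivation, let x ∈ A, and let m ∈ ℕ. Then the ℚ-span of {d^a(x) · d^{2m−a}(x) : 0 ≤ a ≤ 2m} equals the ℚ-span of {d^{2a}(x · d^{2m−2a}(x)) : 0 ≤ a ≤ m}. -/

import Mathlib

open Polynomial Finset

/-- Iterated Leibniz rule for a derivation. -/
private lemma derivation_iterate_mul {A : Type*} [CommRing A] [Algebra ℚ A]
    (d : Derivation ℚ A A) (n : ℕ) (x y : A) :
    (⇑d)^[n] (x * y) =
      ∑ k ∈ range (n + 1), n.choose k • ((⇑d)^[n - k] x * (⇑d)^[k] y) := by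
  induction n with
  | zero => simp
  | succ n IH =>
    calc
      (⇑d)^[n + 1] (x * y)
          = d (∑ k ∈ range (n + 1), n.choose k • ((⇑d)^[n - k] x * (⇑d)^[k] y)) := by
        rw [Function.iterate_succ_apply', IH]
      _ = (∑ k ∈ range (n + 1), n.choose k • ((⇑d)^[n - k + 1] x * (⇑d)^[k] y)) +
          ∑ k ∈ range (n + 1), n.choose k • ((⇑d)^[n - k] x * (⇑d)^[k + 1] y) := by
        rw [map_sum, ← sum_add_distrib]
        refine sum_congr rfl fun k _ => ?_
        rw [map_nsmul, Derivation.leibniz, smul_eq_mul, smul_eq_mul, ← smul_add]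
        congr 1
        rw [Function.iterate_succ_apply', Function.iterate_succ_apply']
        ring
      _ = (∑ k ∈ range (n + 1),
                n.choose (k + 1) • ((⇑d)^[n - k] x * (⇑d)^[k + 1] y)) +
              1 • ((⇑d)^[n + 1] x * (⇑d)^[0] y) +
            ∑ k ∈ range (n + 1), n.choose k • ((⇑d)^[n - k] x * (⇑d)^[k + 1] y) := ?_
      _ = ((∑ k ∈ range (n + 1), n.choose k • ((⇑d)^[n - k] x * (⇑d)^[k + 1] y)) +
              ∑ k ∈ range (n + 1),
                n.choose (k + 1) • ((⇑d)^[n - k] x * (⇑d)^[k + 1] y)) +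
            1 • ((⇑d)^[n + 1] x * (⇑d)^[0] y) := by
        rw [add_comm, add_assoc]
      _ = (∑ i ∈ range (n + 1),
              (n + 1).choose (i + 1) • ((⇑d)^[n + 1 - (i + 1)] x * (⇑d)^[i + 1] y)) +
            1 • ((⇑d)^[n + 1] x * (⇑d)^[0] y) := by
        simp_rw [Nat.choose_succ_succ, Nat.succ_sub_succ, add_smul, sum_add_distrib]
      _ = ∑ k ∈ range (n + 1 + 1),
            (n + 1).choose k • ((⇑d)^[n + 1 - k] x * (⇑d)^[k] y) := by
        rw [sum_range_succ' _ (n + 1), Nat.choose_zero_right, tsub_zero]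
    congr
    refine (sum_range_succ' _ _).trans (congr_arg₂ (· + ·) ?_ ?_)
    · rw [sum_range_succ, Nat.choose_succ_self, zero_smul, add_zero]
      refine sum_congr rfl fun k hk => ?_
      rw [mem_range] at hk
      congr
      omega
    · rw [Nat.choose_zero_right, tsub_zero]

/-- Polynomial linear independence by induction. -/
private lemma poly_indep : ∀ (m : ℕ) (f : ℕ → ℚ),
    (∑ a ∈ range (m + 1), f a • ((X + 1) ^ (2 * a) * (1 + X ^ (2 * (m - a))) : ℚ[X]) = 0) →
    ∀ a ≤ m, f a = 0 := by
  intro m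
  induction m with
  | zero =>
    intro f h a ha
    interval_cases a
    have := congrArg (fun p => Polynomial.coeff p 0) h
    simpa using this
  | succ m IH =>
    intro f h
    have h0 : f 0 = 0 := by
      have hev := congrArg (Polynomial.eval (-1 : ℚ)) h
      simp only [eval_finset_sum, eval_smul, eval_mul, eval_pow, eval_add, eval_one, eval_X,
        smul_eq_mul, eval_zero, neg_add_cancel] at hev
      rw [Finset.sum_eq_single_of_mem 0 (by simp)
        (fun b _ hb => by rw [zero_pow (by omega)]; ring)] at hev
      have h1 : ((-1 : ℚ)) ^ (2 * (m + 1 - 0)) = 1 := by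
        rw [pow_mul]; norm_num
      rw [h1] at hev
      norm_num at hev
      exact hev
    have hfac : ∑ b ∈ range (m + 1),
        f (b + 1) • ((X + 1) ^ (2 * (b + 1)) * (1 + X ^ (2 * (m + 1 - (b + 1)))) : ℚ[X])
        = (X + 1) ^ 2 *
          ∑ b ∈ range (m + 1), f (b + 1) • ((X + 1) ^ (2 * b) * (1 + X ^ (2 * (m - b)))) := by
      rw [Finset.mul_sum]
      refine sum_congr rfl fun b hb => ?_
      have he : m + 1 - (b + 1) = m - b := by omega
      rw [he]
      simp only [Polynomial.smul_eq_C_mul]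
      ring
    rw [Finset.sum_range_succ', h0, zero_smul, add_zero, hfac] at h
    have hX : ((X + 1 : ℚ[X])) ^ 2 ≠ 0 := by
      apply pow_ne_zero
      intro hh
      simpa [Polynomial.coeff_one] using congrArg (fun p => Polynomial.coeff p 1) hh
    have hin := (mul_eq_zero.mp h).resolve_left hX
    intro a ha
    rcases Nat.eq_zero_or_pos a with h | h
    · rw [h]; exact h0
    · obtain ⟨b, rfl⟩ := Nat.exists_eq_add_of_lt h
      rw [zero_add]
      exact IH _ hin b (by omega)

private lemma mem_span_of_rows {ι : Type*} [Fintype ι] [DecidableEq ι] [Nonempty ι]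
    {A : Type*} [AddCommGroup A] [Module ℚ A]
    (R : ι → ι → ℚ) (hR : LinearIndependent ℚ R) (v w : ι → A)
    (hv : ∀ i, v i = ∑ j, R i j • w j) (j : ι) :
    w j ∈ Submodule.span ℚ (Set.range v) := by
  have hspan : Submodule.span ℚ (Set.range R) = ⊤ :=
    hR.span_eq_top_of_card_eq_finrank (by simp [Module.finrank_fintype_fun_eq_card])
  have hmem : Pi.single j (1 : ℚ) ∈ Submodule.span ℚ (Set.range R) := by
    rw [hspan]; trivial
  rw [Submodule.mem_span_range_iff_exists_fun] at hmem
  obtain ⟨c, hc⟩ := hmem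
  have key : ∑ a, c a • v a = w j := by
    simp_rw [hv, Finset.smul_sum, smul_smul]
    rw [Finset.sum_comm]
    have h2 : ∀ jj, (∑ a, c a * R a jj) = (Pi.single j (1 : ℚ) : ι → ℚ) jj := fun jj => by
      simpa using congrFun hc jj
    simp_rw [← Finset.sum_smul, h2]
    rw [Finset.sum_eq_single j (fun b _ hb => by simp [Pi.single_eq_of_ne hb]) (by simp)]
    simp
  rw [← key]
  exact Submodule.sum_mem _ fun a _ =>
    Submodule.smul_mem _ _ (Submodule.subset_span ⟨a, rfl⟩)

private lemma coeff_S (m b j : ℕ) (hb : b ≤ m) :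
    ((X + 1) ^ (2 * b) * (1 + X ^ (2 * (m - b))) : ℚ[X]).coeff j
      = if j ≤ 2 * m then ((2 * b).choose j : ℚ) + ((2 * b).choose (2 * m - j) : ℚ) else 0 := by
  have hmul : ((X + 1) ^ (2 * b) * (1 + X ^ (2 * (m - b))) : ℚ[X])
      = (X + 1) ^ (2 * b) + (X + 1) ^ (2 * b) * X ^ (2 * (m - b)) := by ring
  rw [hmul, coeff_add, coeff_X_add_one_pow, coeff_mul_X_pow']
  by_cases hj : j ≤ 2 * m
  · rw [if_pos hj]
    by_cases hj2 : 2 * (m - b) ≤ j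
    · rw [if_pos hj2, coeff_X_add_one_pow]
      have h2 : (2 * b).choose (j - 2 * (m - b)) = (2 * b).choose (2 * m - j) := by
        have h3 : 2 * m - j = 2 * b - (j - 2 * (m - b)) := by omega
        rw [h3, Nat.choose_symm (by omega)]
      rw [h2]
    · rw [if_neg hj2]
      have h4 : (2 * b).choose (2 * m - j) = 0 := Nat.choose_eq_zero_of_lt (by omega)
      simp [h4]
  · rw [if_neg hj]
    have h4 : (2 * b).choose j = 0 := Nat.choose_eq_zero_of_lt (by omega)
    have hj2 : 2 * (m - b) ≤ j := by omega
    rw [if_pos hj2, coeff_X_add_one_pow, h4]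
    have h5 : (2 * b).choose (j - 2 * (m - b)) = 0 := Nat.choose_eq_zero_of_lt (by omega)
    rw [h5, Nat.cast_zero, add_zero]

private lemma R_indep (m : ℕ) :
    LinearIndependent ℚ (fun (a : Fin (m + 1)) (j : Fin (m + 1)) =>
      (((2 * (a : ℕ)).choose (j : ℕ) : ℚ) + ((2 * (a : ℕ)).choose (2 * m - (j : ℕ)) : ℚ))) := by
  rw [Fintype.linearIndependent_iff]
  intro g hg a
  set f : ℕ → ℚ := fun n => if h : n < m + 1 then g ⟨n, h⟩ else 0 with hf
  have hgj : ∀ j : Fin (m + 1),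
      ∑ b ∈ range (m + 1),
        f b * (((2 * b).choose (j : ℕ) : ℚ) + ((2 * b).choose (2 * m - (j : ℕ)) : ℚ)) = 0 := by
    intro j
    have := congrFun hg j
    rw [← Fin.sum_univ_eq_sum_range]
    simpa [hf, Fin.is_le] using this
  have hp : ∑ b ∈ range (m + 1), f b • ((X + 1) ^ (2 * b) * (1 + X ^ (2 * (m - b))) : ℚ[X])
      = 0 := by
    ext j
    rw [finset_sum_coeff, coeff_zero]
    simp_rw [coeff_smul]
    by_cases hj : j ≤ 2 * m
    · rcases le_or_gt j m with hjm | hjm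
      · calc ∑ b ∈ range (m + 1),
              f b • ((X + 1) ^ (2 * b) * (1 + X ^ (2 * (m - b))) : ℚ[X]).coeff j
            = ∑ b ∈ range (m + 1),
              f b * (((2 * b).choose j : ℚ) + ((2 * b).choose (2 * m - j) : ℚ)) := by
              refine sum_congr rfl fun b hb => ?_
              rw [mem_range] at hb
              rw [coeff_S m b j (by omega), if_pos hj, smul_eq_mul]
          _ = 0 := hgj ⟨j, by omega⟩
      · have hj' : 2 * m - j ≤ m := by omega
        calc ∑ b ∈ range (m + 1),
              f b • ((X + 1) ^ (2 * b) * (1 + X ^ (2 * (m - b))) : ℚ[X]).coeff j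
            = ∑ b ∈ range (m + 1),
              f b * (((2 * b).choose (2 * m - j) : ℚ)
                + ((2 * b).choose (2 * m - (2 * m - j)) : ℚ)) := by
              refine sum_congr rfl fun b hb => ?_
              rw [mem_range] at hb
              rw [coeff_S m b j (by omega), if_pos hj, smul_eq_mul]
              have h6 : 2 * m - (2 * m - j) = j := by omega
              rw [h6, add_comm (((2 * b).choose j : ℚ))]
          _ = 0 := hgj ⟨2 * m - j, by omega⟩
    · refine Finset.sum_eq_zero fun b hb => ?_
      rw [mem_range] at hb
      rw [coeff_S m b j (by omega), if_neg hj, smul_zero]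
  have hz := poly_indep m f hp (a : ℕ) (by omega)
  rw [hf] at hz
  simpa [a.isLt] using hz

theorem spans_eq_of_derivation_even (A : Type*) [CommRing A] [Algebra ℚ A]
    (d : Derivation ℚ A A) (x : A) (m : ℕ) :
    Submodule.span ℚ {z : A | ∃ a, a ≤ 2 * m ∧ z = (⇑d)^[a] x * (⇑d)^[2 * m - a] x} =
      Submodule.span ℚ
        {z : A | ∃ a, a ≤ m ∧ z = (⇑d)^[2 * a] (x * (⇑d)^[2 * m - 2 * a] x)} := by
  have usymm : ∀ k, k ≤ 2 * m →
      (⇑d)^[2 * m - k] x * (⇑d)^[2 * m - (2 * m - k)] x = (⇑d)^[k] x * (⇑d)^[2 * m - k] x := by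
    intro k hk
    rw [Nat.sub_sub_self hk, mul_comm]
  have expand : ∀ a, a ≤ m → (⇑d)^[2 * a] (x * (⇑d)^[2 * m - 2 * a] x)
      = ∑ k ∈ range (2 * m + 1),
          ((2 * a).choose k : ℚ) • ((⇑d)^[k] x * (⇑d)^[2 * m - k] x) := by
    intro a ha
    rw [derivation_iterate_mul]
    have step1 : ∑ k ∈ range (2 * a + 1),
        (2 * a).choose k • ((⇑d)^[2 * a - k] x * (⇑d)^[k] ((⇑d)^[2 * m - 2 * a] x))
        = ∑ k ∈ range (2 * a + 1),
            ((2 * a).choose k : ℚ) • ((⇑d)^[k] x * (⇑d)^[2 * m - k] x) := by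
      rw [← Finset.sum_range_reflect
        (fun k => ((2 * a).choose k : ℚ) • ((⇑d)^[k] x * (⇑d)^[2 * m - k] x)) (2 * a + 1)]
      refine sum_congr rfl fun k hk => ?_
      rw [mem_range] at hk
      rw [← Function.iterate_add_apply]
      have h1 : 2 * a + 1 - 1 - k = 2 * a - k := by omega
      rw [h1]
      have h2 : k + (2 * m - 2 * a) = 2 * m - (2 * a - k) := by omega
      rw [h2, Nat.choose_symm (show k ≤ 2 * a by omega), Nat.cast_smul_eq_nsmul]
    rw [step1]
    apply Finset.sum_subset
    · intro k hk
      rw [mem_range] at *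
      omega
    · intro k hk hk2
      rw [mem_range] at hk hk2
      rw [Nat.choose_eq_zero_of_lt (by omega), Nat.cast_zero, zero_smul]
  have fold : ∀ a, a ≤ m →
      ∑ k ∈ range (2 * m + 1), ((2 * a).choose k : ℚ) • ((⇑d)^[k] x * (⇑d)^[2 * m - k] x)
      = ∑ j ∈ range (m + 1), (((2 * a).choose j : ℚ) + ((2 * a).choose (2 * m - j) : ℚ)) •
          ((if j = m then (2 : ℚ)⁻¹ else 1) • ((⇑d)^[j] x * (⇑d)^[2 * m - j] x)) := by
    intro a ha
    have hsplit : 2 * m + 1 = (m + 1) + m := by omega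
    rw [hsplit, Finset.sum_range_add]
    have htail : ∑ i ∈ range m,
        ((2 * a).choose (2 * m - i) : ℚ) • ((⇑d)^[i] x * (⇑d)^[2 * m - i] x)
        = ∑ i ∈ range m, ((2 * a).choose (m + 1 + i) : ℚ) •
            ((⇑d)^[m + 1 + i] x * (⇑d)^[2 * m - (m + 1 + i)] x) := by
      refine Eq.trans ?_ (Finset.sum_range_reflect
        (fun i => ((2 * a).choose (m + 1 + i) : ℚ) •
          ((⇑d)^[m + 1 + i] x * (⇑d)^[2 * m - (m + 1 + i)] x)) m)
      refine sum_congr rfl fun i hi => ?_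
      rw [mem_range] at hi
      have h1 : m + 1 + (m - 1 - i) = 2 * m - i := by omega
      rw [h1, usymm i (by omega)]
    rw [← htail, Finset.sum_range_succ, Finset.sum_range_succ]
    have hmid : (((2 * a).choose m : ℚ) + ((2 * a).choose (2 * m - m) : ℚ)) •
        ((if m = m then (2 : ℚ)⁻¹ else 1) • ((⇑d)^[m] x * (⇑d)^[2 * m - m] x))
        = ((2 * a).choose m : ℚ) • ((⇑d)^[m] x * (⇑d)^[2 * m - m] x) := by
      rw [if_pos rfl, smul_smul]
      have h2 : 2 * m - m = m := by omega
      rw [h2]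
      congr 1
      ring
    rw [hmid]
    have hrest : ∀ j ∈ range m,
        (((2 * a).choose j : ℚ) + ((2 * a).choose (2 * m - j) : ℚ)) •
          ((if j = m then (2 : ℚ)⁻¹ else 1) • ((⇑d)^[j] x * (⇑d)^[2 * m - j] x))
        = ((2 * a).choose j : ℚ) • ((⇑d)^[j] x * (⇑d)^[2 * m - j] x)
          + ((2 * a).choose (2 * m - j) : ℚ) • ((⇑d)^[j] x * (⇑d)^[2 * m - j] x) := by
      intro j hj
      rw [mem_range] at hj
      rw [if_neg (by omega), one_smul, add_smul]
    rw [Finset.sum_congr rfl hrest, Finset.sum_add_distrib]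
    abel
  apply le_antisymm
  · rw [Submodule.span_le]
    have main : ∀ b, b ≤ m → (⇑d)^[b] x * (⇑d)^[2 * m - b] x ∈
        Submodule.span ℚ
          {z : A | ∃ a, a ≤ m ∧ z = (⇑d)^[2 * a] (x * (⇑d)^[2 * m - 2 * a] x)} := by
      intro b hbm
      have hv : ∀ i : Fin (m + 1),
          (fun a : Fin (m + 1) => (⇑d)^[2 * (a : ℕ)] (x * (⇑d)^[2 * m - 2 * (a : ℕ)] x)) i
          = ∑ j : Fin (m + 1),
              (((2 * (i : ℕ)).choose (j : ℕ) : ℚ)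
                + ((2 * (i : ℕ)).choose (2 * m - (j : ℕ)) : ℚ)) •
              ((if (j : ℕ) = m then (2 : ℚ)⁻¹ else 1) •
                ((⇑d)^[(j : ℕ)] x * (⇑d)^[2 * m - (j : ℕ)] x)) := by
        intro i
        simp only
        rw [expand _ (by omega), fold _ (by omega)]
        exact (Fin.sum_univ_eq_sum_range
          (fun j => (((2 * (i : ℕ)).choose j : ℚ) + ((2 * (i : ℕ)).choose (2 * m - j) : ℚ)) •
            ((if j = m then (2 : ℚ)⁻¹ else 1) • ((⇑d)^[j] x * (⇑d)^[2 * m - j] x)))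
          (m + 1)).symm
      have hmem := mem_span_of_rows _ (R_indep m) _
        (fun j : Fin (m + 1) => (if (j : ℕ) = m then (2 : ℚ)⁻¹ else 1) •
          ((⇑d)^[(j : ℕ)] x * (⇑d)^[2 * m - (j : ℕ)] x)) hv ⟨b, by omega⟩
      have hsub : Set.range
          (fun a : Fin (m + 1) => (⇑d)^[2 * (a : ℕ)] (x * (⇑d)^[2 * m - 2 * (a : ℕ)] x)) ⊆
          {z : A | ∃ a, a ≤ m ∧ z = (⇑d)^[2 * a] (x * (⇑d)^[2 * m - 2 * a] x)} := by
        rintro _ ⟨i, rfl⟩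
        exact ⟨(i : ℕ), by omega, rfl⟩
      have hmem2 := Submodule.span_mono hsub hmem
      by_cases hbm2 : b = m
      · have hsmul := Submodule.smul_mem
          (Submodule.span ℚ
            {z : A | ∃ a, a ≤ m ∧ z = (⇑d)^[2 * a] (x * (⇑d)^[2 * m - 2 * a] x)})
          (2 : ℚ) hmem2
        simpa [hbm2, smul_smul] using hsmul
      · simpa [hbm2] using hmem2
    rintro z ⟨b, hb, rfl⟩
    rcases le_or_gt b m with hbm | hbm
    · exact main b hbm
    · rw [← usymm b hb]
      exact main (2 * m - b) (by omega)
  · rw [Submodule.span_le]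
    rintro z ⟨a, ha, rfl⟩
    rw [expand a ha]
    refine Submodule.sum_mem _ fun k hk => ?_
    rw [mem_range] at hk
    exact Submodule.smul_mem _ _ (Submodule.subset_span ⟨k, by omega, rfl⟩)
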